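/- For constants c₂, c₃ > 0, δ ≥ 0 and 0 < ε < π/2, ∫_ε^{π/2} min{ c₂·cos²α/sin α, c₃·δ·cos³α/sin²α } dα ≤ c₂·[1 + max{0, log( c₃δ / (2c₂·sin(ε/2)) )}]. -/

import Mathlib

open Real MeasureTheory

set_option maxHeartbeats 1000000 in
/-- For `c₂, c₃ > 0`, `δ ≥ 0` and `0 < ε < π/2`,
`∫_ε^{π/2} min{c₂·cos²α/sin α, c₃·δ·cos³α/sin²α} dα
  ≤ c₂·[1 + max{0, log(c₃δ/(2c₂·sin(ε/2)))}]`. -/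
theorem stmt4 (c₂ c₃ δ ε : ℝ) (hc₂ : 0 < c₂) (hc₃ : 0 < c₃) (hδ : 0 ≤ δ)
    (hε : 0 < ε) (hε' : ε < π / 2) :
    ∫ α in ε..(π / 2),
        min (c₂ * Real.cos α ^ 2 / Real.sin α) (c₃ * δ * Real.cos α ^ 3 / Real.sin α ^ 2) ≤
      c₂ * (1 + max 0 (Real.log (c₃ * δ / (2 * c₂ * Real.sin (ε / 2))))) := by
  have hπ : (0:ℝ) < π := Real.pi_pos
  have hsqrt2 : Real.sqrt 2 ≤ 2 := by
    nlinarith [Real.sq_sqrt (show (0:ℝ) ≤ 2 by norm_num), Real.sqrt_nonneg 2]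
  have hsqrt2pos : (0:ℝ) < Real.sqrt 2 := by positivity
  set s₀ := Real.sin (ε/2) with hs₀def
  have hs₀pos : 0 < s₀ := Real.sin_pos_of_pos_of_lt_pi (by linarith) (by linarith)
  have hs₀lt : s₀ ≤ Real.sqrt 2 / 2 := by
    rw [hs₀def, ← Real.sin_pi_div_four]
    exact (Real.strictMonoOn_sin ⟨by linarith, by linarith⟩ ⟨by linarith, by linarith⟩
      (by linarith)).le
  set sstar := c₃ * δ / (2*c₂) with hsstardef
  set σ := min (Real.sqrt 2/2) (max s₀ sstar) with hσdef
  have hσpos : 0 < σ := lt_min (by positivity) (lt_of_lt_of_le hs₀pos (le_max_left _ _))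
  have hσles : σ ≤ Real.sqrt 2 / 2 := min_le_left _ _
  have hσ1 : σ ≤ 1 := by linarith
  have hs₀σ : s₀ ≤ σ := le_min hs₀lt (le_max_left _ _)
  set β := 2 * Real.arcsin σ with hβdef
  have hβhalf : β/2 = Real.arcsin σ := by rw [hβdef]; ring
  have hsinβ : Real.sin (β/2) = σ := by rw [hβhalf, Real.sin_arcsin (by linarith) hσ1]
  have hβε : ε ≤ β := by
    have h1 : Real.arcsin s₀ = ε/2 := Real.arcsin_sin (by linarith) (by linarith)
    have h2 := Real.monotone_arcsin hs₀σ
    rw [h1] at h2; linarith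
  have hβπ : β ≤ π/2 := by
    have h1 := Real.monotone_arcsin hσles
    have h2 : Real.arcsin (Real.sqrt 2/2) = π/4 := by
      rw [← Real.sin_pi_div_four]
      exact Real.arcsin_sin (by linarith) (by linarith)
    rw [h2] at h1; linarith
  have hfacts : ∀ x ∈ Set.Icc ε (π/2), 0 < Real.sin x ∧ 0 < Real.sin (x/2) ∧
      0 < Real.cos (x/2) ∧ 0 ≤ Real.cos x ∧ Real.cos x ≤ Real.cos (x/2) ∧
      Real.sin x = 2 * Real.sin (x/2) * Real.cos (x/2) := by
    intro x hx
    obtain ⟨hx1, hx2⟩ := hx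
    refine ⟨Real.sin_pos_of_pos_of_lt_pi (by linarith) (by linarith),
      Real.sin_pos_of_pos_of_lt_pi (by linarith) (by linarith),
      Real.cos_pos_of_mem_Ioo ⟨by linarith, by linarith⟩,
      Real.cos_nonneg_of_mem_Icc ⟨by linarith, by linarith⟩,
      Real.cos_le_cos_of_nonneg_of_le_pi (by linarith) (by linarith) (by linarith), ?_⟩
    rw [← Real.sin_two_mul]; ring_nf
  set f : ℝ → ℝ := fun α => min (c₂ * Real.cos α ^ 2 / Real.sin α)
    (c₃ * δ * Real.cos α ^ 3 / Real.sin α ^ 2) with hfdef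
  set gA : ℝ → ℝ := fun x => c₂ * Real.cos (x/2) / (2 * Real.sin (x/2)) with hgAdef
  set gB : ℝ → ℝ := fun x => c₃ * δ * Real.cos (x/2) / (4 * Real.sin (x/2)^2) with hgBdef
  -- pointwise bounds
  have hA : ∀ x ∈ Set.Icc ε (π/2), f x ≤ gA x := by
    intro x hx
    obtain ⟨hs, hs2, hc2, hcn, hcle, hid⟩ := hfacts x hx
    refine (min_le_left _ _).trans ?_
    show c₂ * Real.cos x ^ 2 / Real.sin x ≤ c₂ * Real.cos (x/2) / (2 * Real.sin (x/2))
    rw [hid, div_le_div_iff₀ (by positivity) (by positivity)]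
    have h2 : Real.cos x ^ 2 ≤ Real.cos (x/2) ^ 2 := pow_le_pow_left₀ hcn hcle 2
    nlinarith [mul_le_mul_of_nonneg_left h2
      (show (0:ℝ) ≤ c₂ * (2 * Real.sin (x/2)) by positivity)]
  have hB : ∀ x ∈ Set.Icc ε (π/2), f x ≤ gB x := by
    intro x hx
    obtain ⟨hs, hs2, hc2, hcn, hcle, hid⟩ := hfacts x hx
    refine (min_le_right _ _).trans ?_
    show c₃ * δ * Real.cos x ^ 3 / Real.sin x ^ 2
        ≤ c₃ * δ * Real.cos (x/2) / (4 * Real.sin (x/2)^2)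
    have hid2 : Real.sin x ^ 2 = 4 * Real.sin (x/2)^2 * Real.cos (x/2)^2 := by rw [hid]; ring
    rw [hid2, div_le_div_iff₀ (by positivity) (by positivity)]
    have h3 : Real.cos x ^ 3 ≤ Real.cos (x/2) ^ 3 := pow_le_pow_left₀ hcn hcle 3
    nlinarith [mul_le_mul_of_nonneg_left h3
      (show (0:ℝ) ≤ c₃ * δ * (4 * Real.sin (x/2)^2) by positivity)]
  -- integrability
  have hsub1 : Set.uIcc ε β ⊆ Set.uIcc ε (π/2) := by
    rw [Set.uIcc_of_le hβε, Set.uIcc_of_le hε'.le]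
    exact Set.Icc_subset_Icc le_rfl hβπ
  have hsub2 : Set.uIcc β (π/2) ⊆ Set.uIcc ε (π/2) := by
    rw [Set.uIcc_of_le hβπ, Set.uIcc_of_le hε'.le]
    exact Set.Icc_subset_Icc hβε le_rfl
  have hcontf : ContinuousOn f (Set.Icc ε (π/2)) := by
    apply ContinuousOn.inf
    · exact ContinuousOn.div (by fun_prop) (by fun_prop) (fun x hx => (hfacts x hx).1.ne')
    · refine ContinuousOn.div (by fun_prop) (by fun_prop) (fun x hx => ?_)
      have := (hfacts x hx).1; positivity
  have hfint : IntervalIntegrable f volume ε (π/2) := by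
    apply ContinuousOn.intervalIntegrable
    rwa [Set.uIcc_of_le hε'.le]
  have hfint1 : IntervalIntegrable f volume ε β := hfint.mono_set hsub1
  have hfint2 : IntervalIntegrable f volume β (π/2) := hfint.mono_set hsub2
  have hgAcont : ContinuousOn gA (Set.uIcc ε β) := by
    rw [Set.uIcc_of_le hβε]
    refine ContinuousOn.div (by fun_prop) (by fun_prop) (fun x hx => ?_)
    have h := (hfacts x ⟨hx.1, hx.2.trans hβπ⟩).2.1; positivity
  have hgBcont : ContinuousOn gB (Set.uIcc β (π/2)) := by
    rw [Set.uIcc_of_le hβπ]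
    refine ContinuousOn.div (by fun_prop) (by fun_prop) (fun x hx => ?_)
    have h := (hfacts x ⟨hβε.trans hx.1, hx.2⟩).2.1; positivity
  have hgAint : IntervalIntegrable gA volume ε β := hgAcont.intervalIntegrable
  have hgBint : IntervalIntegrable gB volume β (π/2) := hgBcont.intervalIntegrable
  -- FTC computations
  have hIA : (∫ x in ε..β, gA x)
      = c₂ * Real.log (Real.sin (β/2)) - c₂ * Real.log (Real.sin (ε/2)) := by
    refine intervalIntegral.integral_eq_sub_of_hasDerivAt (f := fun x => c₂ * Real.log (Real.sin (x/2))) (fun x hx => ?_) hgAint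
    rw [Set.uIcc_of_le hβε] at hx
    have hs2 := (hfacts x ⟨hx.1, hx.2.trans hβπ⟩).2.1
    have hd : HasDerivAt (fun y => Real.sin (y/2)) (Real.cos (x/2) * (1/2)) x := by
      simpa [Function.comp_def] using (Real.hasDerivAt_sin (x/2)).comp x ((hasDerivAt_id x).div_const 2)
    have := (hd.log hs2.ne').const_mul c₂
    refine this.congr_deriv ?_
    rw [hgAdef]; ring
  have hIB : (∫ x in β..(π/2), gB x)
      = (-(c₃*δ/2) * (Real.sin ((π/2)/2))⁻¹) - (-(c₃*δ/2) * (Real.sin (β/2))⁻¹) := by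
    refine intervalIntegral.integral_eq_sub_of_hasDerivAt (f := fun x => -(c₃*δ/2) * (Real.sin (x/2))⁻¹) (fun x hx => ?_) hgBint
    rw [Set.uIcc_of_le hβπ] at hx
    have hs2 := (hfacts x ⟨hβε.trans hx.1, hx.2⟩).2.1
    have hd : HasDerivAt (fun y => Real.sin (y/2)) (Real.cos (x/2) * (1/2)) x := by
      simpa [Function.comp_def] using (Real.hasDerivAt_sin (x/2)).comp x ((hasDerivAt_id x).div_const 2)
    have := (hd.inv hs2.ne').const_mul (-(c₃*δ/2))
    refine this.congr_deriv ?_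
    rw [hgBdef]; ring
  -- comparison on each piece
  have hle1 : (∫ x in ε..β, f x) ≤ ∫ x in ε..β, gA x := by
    refine intervalIntegral.integral_mono_on hβε hfint1 hgAint (fun x hx => ?_)
    exact hA x ⟨hx.1, hx.2.trans hβπ⟩
  have hle2 : (∫ x in β..(π/2), f x) ≤ ∫ x in β..(π/2), gB x := by
    refine intervalIntegral.integral_mono_on hβπ hfint2 hgBint (fun x hx => ?_)
    exact hB x ⟨hβε.trans hx.1, hx.2⟩
  have hsplit : (∫ x in ε..(π/2), f x) = (∫ x in ε..β, f x) + ∫ x in β..(π/2), f x :=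
    (intervalIntegral.integral_add_adjacent_intervals hfint1 hfint2).symm
  -- final numeric bounds
  have hsinpi4 : Real.sin ((π/2)/2) = Real.sqrt 2 / 2 := by
    rw [show (π/2)/2 = π/4 by ring, Real.sin_pi_div_four]
  have claim1 : c₂ * Real.log σ - c₂ * Real.log s₀ ≤
      c₂ * max 0 (Real.log (c₃ * δ / (2 * c₂ * s₀))) := by
    rcases le_or_gt sstar s₀ with h | h
    · have hσeq : σ = s₀ := by rw [hσdef, max_eq_left h, min_eq_right hs₀lt]
      rw [hσeq]
      have := mul_nonneg hc₂.le (le_max_left (0:ℝ) (Real.log (c₃ * δ / (2 * c₂ * s₀))))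
      linarith
    · have hsstarpos : 0 < sstar := hs₀pos.trans h
      have hσs : σ ≤ sstar := (min_le_right _ _).trans_eq (max_eq_right h.le)
      have hlog : Real.log σ ≤ Real.log sstar := Real.log_le_log hσpos hσs
      have hL : Real.log sstar - Real.log s₀ = Real.log (c₃ * δ / (2 * c₂ * s₀)) := by
        rw [← Real.log_div hsstarpos.ne' hs₀pos.ne']
        congr 1
        rw [hsstardef]
        field_simp
      have hmax : Real.log (c₃ * δ / (2 * c₂ * s₀)) ≤
          max 0 (Real.log (c₃ * δ / (2 * c₂ * s₀))) := le_max_right _ _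
      nlinarith [mul_le_mul_of_nonneg_left hlog hc₂.le,
        mul_le_mul_of_nonneg_left hmax hc₂.le]
  have claim2 : (c₃*δ/2) * σ⁻¹ - (c₃*δ/2) * (Real.sqrt 2/2)⁻¹ ≤ c₂ := by
    rcases le_or_gt (Real.sqrt 2/2) sstar with h | h
    · have hσeq : σ = Real.sqrt 2/2 := min_eq_left (h.trans (le_max_right _ _))
      rw [hσeq]; linarith
    · rcases eq_or_lt_of_le hδ with h0 | h0
      · rw [← h0]; norm_num; linarith
      · have hsp : 0 < sstar := by rw [hsstardef]; positivity
        have hσstar : sstar ≤ σ := le_min h.le (le_max_right _ _)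
        have hinv : σ⁻¹ ≤ sstar⁻¹ := inv_anti₀ hsp hσstar
        have hval : (c₃*δ/2) * sstar⁻¹ = c₂ := by
          rw [hsstardef]; field_simp
        have h1 : (c₃*δ/2) * σ⁻¹ ≤ (c₃*δ/2) * sstar⁻¹ :=
          mul_le_mul_of_nonneg_left hinv (by positivity)
        have h2 : 0 ≤ (c₃*δ/2) * (Real.sqrt 2/2)⁻¹ := by positivity
        linarith
  calc ∫ x in ε..(π/2), f x
      = (∫ x in ε..β, f x) + ∫ x in β..(π/2), f x := hsplit
    _ ≤ (∫ x in ε..β, gA x) + ∫ x in β..(π/2), gB x := add_le_add hle1 hle2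
    _ = (c₂ * Real.log σ - c₂ * Real.log s₀) +
        ((c₃*δ/2) * σ⁻¹ - (c₃*δ/2) * (Real.sqrt 2/2)⁻¹) := by
        rw [hIA, hIB, hsinβ, hsinpi4]; ring
    _ ≤ c₂ * max 0 (Real.log (c₃ * δ / (2 * c₂ * s₀))) + c₂ := add_le_add claim1 claim2
    _ = c₂ * (1 + max 0 (Real.log (c₃ * δ / (2 * c₂ * s₀)))) := by ring
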